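/- Let p be an odd prime and ζ_p a primitive p-th root of unity. Then 1 + ζ_p is not a p-th power in the cyclotomic field ℚ(ζ_p). -/

import Mathlib

theorem one_add_primitive_root_not_pth_power
    (p : ℕ) (hp : p.Prime) (hodd : Odd p)
    (ζ : CyclotomicField p ℚ) (hζ : IsPrimitiveRoot ζ p) :
    ¬ ∃ x : CyclotomicField p ℚ, x ^ p = 1 + ζ := by
  rintro ⟨x, hx⟩
  haveI : NeZero p := ⟨hp.ne_zero⟩
  haveI : NeZero (p : ℚ) := ⟨by exact_mod_cast hp.ne_zero⟩
  haveI : IsCyclotomicExtension {p} ℚ (CyclotomicField p ℚ) :=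
    CyclotomicField.isCyclotomicExtension p ℚ
  have hp1 : 1 < p := hp.one_lt
  have hirr : Irreducible (Polynomial.cyclotomic p ℚ) :=
    Polynomial.cyclotomic.irreducible_rat hp.pos
  let τ : CyclotomicField p ℚ ≃ₐ[ℚ] CyclotomicField p ℚ :=
    (IsCyclotomicExtension.autEquivPow (CyclotomicField p ℚ) hirr).symm (-1)
  have hζ0 := IsCyclotomicExtension.zeta_spec p ℚ
    (CyclotomicField p ℚ)
  have hat : hζ0.autToPow ℚ τ = -1 :=
    (IsCyclotomicExtension.autEquivPow (CyclotomicField p ℚ) hirr).apply_symm_apply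
      (-1 : (ZMod p)ˣ)
  set ζ0 := IsCyclotomicExtension.zeta p ℚ (CyclotomicField p ℚ)
    with hζ0def
  have hτζ0 : τ ζ0 = ζ0⁻¹ := by
    have hspec := hζ0.autToPow_spec ℚ τ
    rw [hat] at hspec
    have hval : ((-1 : (ZMod p)ˣ) : ZMod p).val
        = p - 1 := by
      haveI : NeZero p := ⟨hp.pos.ne'⟩
      have hc : ((-1 : (ZMod p)ˣ) : ZMod p)
          = ((p - 1 : ℕ) : ZMod p) := by
        have hp0 : ((p : ℕ) : ZMod p) = 0 := by
          exact_mod_cast ZMod.natCast_self p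
        have hsub : ((p - 1 : ℕ) : ZMod p)
            = ((p : ℕ) : ZMod p) - 1 := by
          push_cast [Nat.cast_sub hp1.le]
          ring
        rw [hsub, hp0]
        simp
      rw [hc, ZMod.val_cast_of_lt (by show p - 1 < p; omega)]
    rw [hval] at hspec
    rw [← hspec]
    have h1 : ζ0 ^ (p - 1) * ζ0 = 1 := by
      rw [← pow_succ, Nat.sub_add_cancel hp1.le]
      exact hζ0.pow_eq_one
    exact eq_inv_of_mul_eq_one_left h1
  have hτζ : τ ζ = ζ⁻¹ := by
    obtain ⟨i, _, hi⟩ := hζ0.eq_pow_of_pow_eq_one hζ.pow_eq_one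
    rw [← hi, map_pow, hτζ0, inv_pow]
  have hζne : (1 : CyclotomicField p ℚ) + ζ ≠ 0 := by
    intro h
    have hζeq : ζ = -1 := by linear_combination h
    have h2 := hζ.pow_eq_one
    rw [hζeq, hodd.neg_one_pow] at h2
    exact (by norm_num : (-1 : CyclotomicField p ℚ) ≠ 1) h2
  have hζ0ne : ζ ≠ 0 := hζ.ne_zero hp.pos.ne'
  have hτx : (τ x) ^ p = ζ⁻¹ * (1 + ζ) := by
    rw [← map_pow, hx, map_add, map_one, hτζ]
    field_simp
    ring
  have hτxne : τ x ≠ 0 := by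
    intro h
    rw [h, zero_pow hp.pos.ne'] at hτx
    rcases mul_eq_zero.1 hτx.symm with h' | h'
    · exact (inv_ne_zero hζ0ne) h'
    · exact hζne h'
  have hyp : (x / τ x) ^ p = ζ := by
    rw [div_pow, hx, hτx]
    field_simp
  have hyp2 : (x / τ x) ^ (p ^ 2) = 1 := by
    rw [pow_two, pow_mul, hyp, hζ.pow_eq_one]
  have hord : orderOf (x / τ x) = p ^ 2 := by
    have hdvd : orderOf (x / τ x) ∣ p ^ 2 := orderOf_dvd_of_pow_eq_one hyp2
    rcases (Nat.dvd_prime_pow hp).1 hdvd with ⟨k, hk, hke⟩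
    have hnot : ¬ orderOf (x / τ x) ∣ p := by
      intro hd
      have h1 : (x / τ x) ^ p = 1 := orderOf_dvd_iff_pow_eq_one.1 hd
      rw [hyp] at h1
      exact hζ.ne_one hp1 h1
    interval_cases k
    · rw [pow_zero] at hke
      exact absurd (by rw [hke]; exact one_dvd p) hnot
    · rw [pow_one] at hke
      exact absurd (by rw [hke]) hnot
    · exact hke
  have hprim : IsPrimitiveRoot (x / τ x) (p ^ 2) := hord ▸ IsPrimitiveRoot.orderOf (x / τ x)
  haveI hNZ : NeZero ((p) : ℚ) := ⟨by exact_mod_cast hp.pos.ne'⟩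
  haveI hCE : IsCyclotomicExtension {p} ℚ (CyclotomicField p ℚ) :=
    CyclotomicField.isCyclotomicExtension _ _
  haveI : FiniteDimensional ℚ (CyclotomicField p ℚ) :=
    IsCyclotomicExtension.finiteDimensional {p} ℚ
      (CyclotomicField p ℚ)
  have hirr2 : Irreducible (Polynomial.cyclotomic (Nat.lcm (p ^ 2) (p ^ 2)) ℚ) := by
    rw [Nat.lcm_self]
    exact Polynomial.cyclotomic.irreducible_rat (pow_pos hp.pos 2)
  have hle := IsPrimitiveRoot.lcm_totient_le_finrank hprim hprim hirr2
  rw [Nat.lcm_self,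
    IsCyclotomicExtension.finrank (CyclotomicField p ℚ) hirr,
    Nat.totient_prime_pow hp (by norm_num : 0 < 2)] at hle
  have hle2 : p ^ (2 - 1) * (p - 1) ≤ p - 1 :=
    le_trans hle (le_of_eq (Nat.totient_prime hp))
  have hle3 : p * (p - 1) ≤ 1 * (p - 1) := by simpa using hle2
  have hpos : 0 < p - 1 := by omega
  have hple : p ≤ 1 := Nat.le_of_mul_le_mul_right hle3 hpos
  omega
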